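/- If the SAT formula (in which every variable occurs in exactly 3 clauses, exactly one occurrence being negated) is satisfiable, then the constructed two-color f-SAND instance admits a feasible capacity installation of cost at most (M+2)·m + 8p. -/

import Mathlib

open scoped Classical
open Finset

namespace FSand

variable {V : Type} [Fintype V] [DecidableEq V]

/-- An edge crosses the cut `(S, Sᶜ)`. -/
def Crossing (S : Finset V) (e : Sym2 V) : Prop :=
  ∃ u v, e = s(u, v) ∧ u ∈ S ∧ v ∉ S

/-- Total capacity installed on edges crossing the cut `(S, Sᶜ)`. -/
noncomputable def cutCap (x : Sym2 V → ℕ) (S : Finset V) : ℕ :=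
  ∑ e ∈ Finset.univ.filter (Crossing S), x e

/-- Feasibility of a capacity installation for the f-SAND instance `(G, r, C)`. -/
def Feasible {ι : Type} (G : SimpleGraph V) (r : V) (C : ι → Finset V)
    (x : Sym2 V → ℕ) : Prop :=
  (∀ e, e ∉ G.edgeSet → x e = 0) ∧
  ∀ S : Finset V, r ∉ S → ∀ i : ι, (C i ∩ S).card ≤ cutCap x S

/-- Cost of a capacity installation. -/
noncomputable def instCost (w : Sym2 V → ℝ) (x : Sym2 V → ℕ) : ℝ :=
  ∑ e : Sym2 V, w e * (x e : ℝ)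

end FSand

namespace SandSat

/-- Vertices of the reduction graph: the root, one node `k_j` per clause, and seven
nodes `y_i^1, …, y_i^7` per variable (indexed here by `Fin 7`, so `y_i^ℓ` has index
`ℓ - 1`). -/
abbrev SandV (m p : ℕ) := Option (Fin m ⊕ (Fin p × Fin 7))

variable {m p : ℕ}

/-- The root. -/
def rt : SandV m p := none
/-- The clause node `k_j`. -/
def kv (j : Fin m) : SandV m p := some (Sum.inl j)
/-- The variable node `y_i^{ℓ+1}`. -/
def yv (i : Fin p) (ℓ : Fin 7) : SandV m p := some (Sum.inr (i, ℓ))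

/-- The SAT formula, given by the clause indices `i1 i, i2 i` of the two positive
occurrences and `i3 i` of the negated occurrence of each variable `x_i`, is
satisfiable. -/
def Satisfiable (i1 i2 i3 : Fin p → Fin m) : Prop :=
  ∃ a : Fin p → Bool, ∀ j : Fin m,
    (∃ i, (i1 i = j ∨ i2 i = j) ∧ a i = true) ∨ (∃ i, i3 i = j ∧ a i = false)

/-- The edges `{r, y_i^1}, {r, y_i^3}, {r, y_i^5}, {r, y_i^7}` (cost 2). -/
def RootEdge (e : Sym2 (SandV m p)) : Prop :=
  ∃ i, e = s(rt, yv i 0) ∨ e = s(rt, yv i 2) ∨ e = s(rt, yv i 4) ∨ e = s(rt, yv i 6)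

/-- The edges `{y_i^ℓ, y_i^{ℓ+1}}`, `ℓ = 1, …, 6` (cost 1). -/
def PathEdge (e : Sym2 (SandV m p)) : Prop :=
  ∃ i, e = s(yv i 0, yv i 1) ∨ e = s(yv i 1, yv i 2) ∨ e = s(yv i 2, yv i 3) ∨
    e = s(yv i 3, yv i 4) ∨ e = s(yv i 4, yv i 5) ∨ e = s(yv i 5, yv i 6)

/-- The edges `{y_i^2, k_{i_1}}, {y_i^4, k_{i_3}}, {y_i^6, k_{i_2}}` (cost `M`). -/
def CrossEdge (i1 i2 i3 : Fin p → Fin m) (e : Sym2 (SandV m p)) : Prop :=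
  ∃ i, e = s(yv i 1, kv (i1 i)) ∨ e = s(yv i 3, kv (i3 i)) ∨ e = s(yv i 5, kv (i2 i))

/-- The reduction graph. -/
def sandG (i1 i2 i3 : Fin p → Fin m) : SimpleGraph (SandV m p) :=
  SimpleGraph.fromEdgeSet
    {e | RootEdge e ∨ PathEdge e ∨ CrossEdge i1 i2 i3 e}

/-- The edge costs of the reduction graph. -/
noncomputable def sandW (M : ℝ) (i1 i2 i3 : Fin p → Fin m) :
    Sym2 (SandV m p) → ℝ := fun e =>
  if RootEdge e then 2
  else if PathEdge e then 1
  else if CrossEdge i1 i2 i3 e then M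
  else 0

/-- The two colors: `C_1` consists of all clause nodes together with the `y_i^1, y_i^5`,
and `C_2` of all clause nodes together with the `y_i^3, y_i^7`. -/
def sandC (q : Fin 2) : Finset (SandV m p) :=
  (Finset.univ.image kv) ∪
    (if q = 0 then
      Finset.univ.image (fun i => yv i 0) ∪ Finset.univ.image (fun i => yv i 4)
    else
      Finset.univ.image (fun i => yv i 2) ∪ Finset.univ.image (fun i => yv i 6))

/-- Finset of cost-`M` edges. -/
noncomputable def crossE (i1 i2 i3 : Fin p → Fin m) : Finset (Sym2 (SandV m p)) :=
  Finset.univ.filter (CrossEdge i1 i2 i3)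

end SandSat


namespace SandSat

variable {m p : ℕ}

/-- Variable `i` with slot `s` serves clause `j` under assignment `a`. -/
def serves (i1 i2 i3 : Fin p → Fin m) (a : Fin p → Bool) (j : Fin m) (i : Fin p)
    (s : Fin 3) : Prop :=
  (s = 0 ∧ i1 i = j ∧ a i = true) ∨ (s = 1 ∧ i2 i = j ∧ a i = true) ∨
    (s = 2 ∧ i3 i = j ∧ a i = false)

noncomputable def clE (vi : Fin m → Fin p) (sl : Fin m → Fin 3) (j : Fin m) :
    Finset (Sym2 (SandV m p)) :=
  if sl j = 0 then
    {s(yv (vi j) 0, yv (vi j) 1), s(yv (vi j) 2, yv (vi j) 1), s(yv (vi j) 1, kv j)}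
  else if sl j = 1 then
    {s(yv (vi j) 4, yv (vi j) 5), s(yv (vi j) 6, yv (vi j) 5), s(yv (vi j) 5, kv j)}
  else
    {s(yv (vi j) 2, yv (vi j) 3), s(yv (vi j) 4, yv (vi j) 3), s(yv (vi j) 3, kv j)}

noncomputable def rE : Finset (Sym2 (SandV m p)) :=
  Finset.univ.biUnion fun i => {s(rt, yv i 0), s(rt, yv i 2), s(rt, yv i 4), s(rt, yv i 6)}

noncomputable def E0 (vi : Fin m → Fin p) (sl : Fin m → Fin 3) : Finset (Sym2 (SandV m p)) :=
  rE ∪ Finset.univ.biUnion (clE vi sl)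

noncomputable def xcap (vi : Fin m → Fin p) (sl : Fin m → Fin 3) :
    Sym2 (SandV m p) → ℕ := fun e => if e ∈ E0 vi sl then 1 else 0

noncomputable def pE (vi : Fin m → Fin p) (sl : Fin m → Fin 3) (q : Fin 2) :
    SandV m p → Finset (Sym2 (SandV m p))
  | none => ∅
  | some (Sum.inr z) => {s(rt, some (Sum.inr z))}
  | some (Sum.inl j) =>
    if q = 0 then
      if sl j = 0 then
        {s(rt, yv (vi j) 2), s(yv (vi j) 2, yv (vi j) 1), s(yv (vi j) 1, kv j)}
      else if sl j = 1 then
        {s(rt, yv (vi j) 6), s(yv (vi j) 6, yv (vi j) 5), s(yv (vi j) 5, kv j)}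
      else
        {s(rt, yv (vi j) 2), s(yv (vi j) 2, yv (vi j) 3), s(yv (vi j) 3, kv j)}
    else
      if sl j = 0 then
        {s(rt, yv (vi j) 0), s(yv (vi j) 0, yv (vi j) 1), s(yv (vi j) 1, kv j)}
      else if sl j = 1 then
        {s(rt, yv (vi j) 4), s(yv (vi j) 4, yv (vi j) 5), s(yv (vi j) 5, kv j)}
      else
        {s(rt, yv (vi j) 4), s(yv (vi j) 4, yv (vi j) 3), s(yv (vi j) 3, kv j)}

lemma mem_sandC_zero {v : SandV m p} :
    v ∈ sandC (m := m) (p := p) 0 ↔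
      (∃ j, v = kv j) ∨ (∃ i, v = yv i 0) ∨ (∃ i, v = yv i 4) := by
  simp [sandC, eq_comm]

lemma mem_sandC_one {v : SandV m p} :
    v ∈ sandC (m := m) (p := p) 1 ↔
      (∃ j, v = kv j) ∨ (∃ i, v = yv i 2) ∨ (∃ i, v = yv i 6) := by
  simp [sandC, eq_comm]

set_option linter.unnecessarySeqFocus false in
lemma key (i1 i2 i3 : Fin p → Fin m) (a : Fin p → Bool) (vi : Fin m → Fin p)
    (sl : Fin m → Fin 3) (hvs : ∀ j, serves i1 i2 i3 a j (vi j) (sl j)) (q : Fin 2) :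
    ∀ v ∈ sandC (m := m) (p := p) q, ∀ v' ∈ sandC q, ∀ e,
      e ∈ pE vi sl q v → e ∈ pE vi sl q v' → v = v' := by
  intro v hv v' hv' e he he'
  rcases (by omega : q = 0 ∨ q = 1) with rfl | rfl
  · rw [mem_sandC_zero] at hv hv'
    rcases hv with ⟨j, rfl⟩ | ⟨i, rfl⟩ | ⟨i, rfl⟩ <;>
      rcases hv' with ⟨j', rfl⟩ | ⟨i', rfl⟩ | ⟨i', rfl⟩
    · rcases hvs j with ⟨h0, hj, haj⟩ | ⟨h0, hj, haj⟩ | ⟨h0, hj, haj⟩ <;>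
        rcases hvs j' with ⟨h0', hj', haj'⟩ | ⟨h0', hj', haj'⟩ | ⟨h0', hj', haj'⟩ <;>
        simp only [pE, h0, h0', kv, yv, rt, Fin.reduceEq, reduceIte, Finset.mem_insert,
          Finset.mem_singleton] at he he' <;>
        rcases he with rfl | rfl | rfl <;> rcases he' with h | h | h <;>
        simp_all [Sym2.eq_iff, kv, yv, rt]
    all_goals
      simp only [pE, kv, yv, rt] at he he' <;> (try split_ifs at he he') <;>
        simp_all [Sym2.eq_iff, kv, yv, rt]
  · rw [mem_sandC_one] at hv hv'
    rcases hv with ⟨j, rfl⟩ | ⟨i, rfl⟩ | ⟨i, rfl⟩ <;>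
      rcases hv' with ⟨j', rfl⟩ | ⟨i', rfl⟩ | ⟨i', rfl⟩
    · rcases hvs j with ⟨h0, hj, haj⟩ | ⟨h0, hj, haj⟩ | ⟨h0, hj, haj⟩ <;>
        rcases hvs j' with ⟨h0', hj', haj'⟩ | ⟨h0', hj', haj'⟩ | ⟨h0', hj', haj'⟩ <;>
        simp only [pE, h0, h0', kv, yv, rt, Fin.reduceEq, reduceIte, Finset.mem_insert,
          Finset.mem_singleton] at he he' <;>
        rcases he with rfl | rfl | rfl <;> rcases he' with h | h | h <;>
        simp_all [Sym2.eq_iff, kv, yv, rt]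
    all_goals
      simp only [pE, kv, yv, rt] at he he' <;> (try split_ifs at he he') <;>
        simp_all [Sym2.eq_iff, kv, yv, rt]

lemma path3 {α : Type} (S : Finset α) (u0 u1 u2 u3 : α)
    (h0 : u0 ∉ S) (h3 : u3 ∈ S) :
    ∃ e, (e = s(u0, u1) ∨ e = s(u1, u2) ∨ e = s(u2, u3)) ∧
      (∃ u v, e = s(u, v) ∧ u ∈ S ∧ v ∉ S) := by
  by_cases h1 : u1 ∈ S
  · exact ⟨s(u0, u1), Or.inl rfl, u1, u0, Sym2.eq_swap, h1, h0⟩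
  by_cases h2 : u2 ∈ S
  · exact ⟨s(u1, u2), Or.inr (Or.inl rfl), u2, u1, Sym2.eq_swap, h2, h1⟩
  · exact ⟨s(u2, u3), Or.inr (Or.inr rfl), u3, u2, Sym2.eq_swap, h3, h2⟩

lemma exists_cross (i1 i2 i3 : Fin p → Fin m) (a : Fin p → Bool) (vi : Fin m → Fin p)
    (sl : Fin m → Fin 3) (hvs : ∀ j, serves i1 i2 i3 a j (vi j) (sl j))
    (S : Finset (SandV m p)) (hr : rt ∉ S) (q : Fin 2) (v : SandV m p)
    (hvc : v ∈ sandC q) (hvS : v ∈ S) :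
    ∃ e, e ∈ pE vi sl q v ∧ FSand.Crossing S e ∧ e ∈ E0 vi sl := by
  rcases (by omega : q = 0 ∨ q = 1) with rfl | rfl
  · rw [mem_sandC_zero] at hvc
    rcases hvc with ⟨j, rfl⟩ | ⟨i, rfl⟩ | ⟨i, rfl⟩
    · rcases hvs j with ⟨h0, hj, haj⟩ | ⟨h0, hj, haj⟩ | ⟨h0, hj, haj⟩
      · obtain ⟨e, hor, hcr⟩ := path3 S rt (yv (vi j) 2) (yv (vi j) 1) (kv j) hr hvS
        refine ⟨e, ?_, hcr, ?_⟩
        · rcases hor with rfl | rfl | rfl <;> simp [pE, kv, h0]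
        · rcases hor with rfl | rfl | rfl
          · exact Finset.mem_union_left _
              (Finset.mem_biUnion.mpr ⟨vi j, Finset.mem_univ _, by simp⟩)
          · exact Finset.mem_union_right _
              (Finset.mem_biUnion.mpr ⟨j, Finset.mem_univ _, by simp [clE, h0]⟩)
          · exact Finset.mem_union_right _
              (Finset.mem_biUnion.mpr ⟨j, Finset.mem_univ _, by simp [clE, h0]⟩)
      · obtain ⟨e, hor, hcr⟩ := path3 S rt (yv (vi j) 6) (yv (vi j) 5) (kv j) hr hvS
        refine ⟨e, ?_, hcr, ?_⟩
        · rcases hor with rfl | rfl | rfl <;> simp [pE, kv, h0]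
        · rcases hor with rfl | rfl | rfl
          · exact Finset.mem_union_left _
              (Finset.mem_biUnion.mpr ⟨vi j, Finset.mem_univ _, by simp⟩)
          · exact Finset.mem_union_right _
              (Finset.mem_biUnion.mpr ⟨j, Finset.mem_univ _, by simp [clE, h0]⟩)
          · exact Finset.mem_union_right _
              (Finset.mem_biUnion.mpr ⟨j, Finset.mem_univ _, by simp [clE, h0]⟩)
      · obtain ⟨e, hor, hcr⟩ := path3 S rt (yv (vi j) 2) (yv (vi j) 3) (kv j) hr hvS
        refine ⟨e, ?_, hcr, ?_⟩
        · rcases hor with rfl | rfl | rfl <;> simp [pE, kv, h0]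
        · rcases hor with rfl | rfl | rfl
          · exact Finset.mem_union_left _
              (Finset.mem_biUnion.mpr ⟨vi j, Finset.mem_univ _, by simp⟩)
          · exact Finset.mem_union_right _
              (Finset.mem_biUnion.mpr ⟨j, Finset.mem_univ _, by simp [clE, h0]⟩)
          · exact Finset.mem_union_right _
              (Finset.mem_biUnion.mpr ⟨j, Finset.mem_univ _, by simp [clE, h0]⟩)
    · exact ⟨s(rt, yv i 0), by simp [pE, yv], ⟨yv i 0, rt, Sym2.eq_swap, hvS, hr⟩,
        Finset.mem_union_left _ (Finset.mem_biUnion.mpr ⟨i, Finset.mem_univ _, by simp⟩)⟩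
    · exact ⟨s(rt, yv i 4), by simp [pE, yv], ⟨yv i 4, rt, Sym2.eq_swap, hvS, hr⟩,
        Finset.mem_union_left _ (Finset.mem_biUnion.mpr ⟨i, Finset.mem_univ _, by simp⟩)⟩
  · rw [mem_sandC_one] at hvc
    rcases hvc with ⟨j, rfl⟩ | ⟨i, rfl⟩ | ⟨i, rfl⟩
    · rcases hvs j with ⟨h0, hj, haj⟩ | ⟨h0, hj, haj⟩ | ⟨h0, hj, haj⟩
      · obtain ⟨e, hor, hcr⟩ := path3 S rt (yv (vi j) 0) (yv (vi j) 1) (kv j) hr hvS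
        refine ⟨e, ?_, hcr, ?_⟩
        · rcases hor with rfl | rfl | rfl <;> simp [pE, kv, h0]
        · rcases hor with rfl | rfl | rfl
          · exact Finset.mem_union_left _
              (Finset.mem_biUnion.mpr ⟨vi j, Finset.mem_univ _, by simp⟩)
          · exact Finset.mem_union_right _
              (Finset.mem_biUnion.mpr ⟨j, Finset.mem_univ _, by simp [clE, h0]⟩)
          · exact Finset.mem_union_right _
              (Finset.mem_biUnion.mpr ⟨j, Finset.mem_univ _, by simp [clE, h0]⟩)
      · obtain ⟨e, hor, hcr⟩ := path3 S rt (yv (vi j) 4) (yv (vi j) 5) (kv j) hr hvS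
        refine ⟨e, ?_, hcr, ?_⟩
        · rcases hor with rfl | rfl | rfl <;> simp [pE, kv, h0]
        · rcases hor with rfl | rfl | rfl
          · exact Finset.mem_union_left _
              (Finset.mem_biUnion.mpr ⟨vi j, Finset.mem_univ _, by simp⟩)
          · exact Finset.mem_union_right _
              (Finset.mem_biUnion.mpr ⟨j, Finset.mem_univ _, by simp [clE, h0]⟩)
          · exact Finset.mem_union_right _
              (Finset.mem_biUnion.mpr ⟨j, Finset.mem_univ _, by simp [clE, h0]⟩)
      · obtain ⟨e, hor, hcr⟩ := path3 S rt (yv (vi j) 4) (yv (vi j) 3) (kv j) hr hvS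
        refine ⟨e, ?_, hcr, ?_⟩
        · rcases hor with rfl | rfl | rfl <;> simp [pE, kv, h0]
        · rcases hor with rfl | rfl | rfl
          · exact Finset.mem_union_left _
              (Finset.mem_biUnion.mpr ⟨vi j, Finset.mem_univ _, by simp⟩)
          · exact Finset.mem_union_right _
              (Finset.mem_biUnion.mpr ⟨j, Finset.mem_univ _, by simp [clE, h0]⟩)
          · exact Finset.mem_union_right _
              (Finset.mem_biUnion.mpr ⟨j, Finset.mem_univ _, by simp [clE, h0]⟩)
    · exact ⟨s(rt, yv i 2), by simp [pE, yv], ⟨yv i 2, rt, Sym2.eq_swap, hvS, hr⟩,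
        Finset.mem_union_left _ (Finset.mem_biUnion.mpr ⟨i, Finset.mem_univ _, by simp⟩)⟩
    · exact ⟨s(rt, yv i 6), by simp [pE, yv], ⟨yv i 6, rt, Sym2.eq_swap, hvS, hr⟩,
        Finset.mem_union_left _ (Finset.mem_biUnion.mpr ⟨i, Finset.mem_univ _, by simp⟩)⟩

lemma feas (i1 i2 i3 : Fin p → Fin m) (a : Fin p → Bool) (vi : Fin m → Fin p)
    (sl : Fin m → Fin 3) (hvs : ∀ j, serves i1 i2 i3 a j (vi j) (sl j)) :
    FSand.Feasible (sandG i1 i2 i3) rt sandC (xcap vi sl) := by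
  constructor
  · intro e he
    rw [xcap, if_neg]
    intro hE0
    apply he
    rw [sandG, SimpleGraph.edgeSet_fromEdgeSet]
    rcases Finset.mem_union.mp hE0 with h | h
    · obtain ⟨i, -, hmem⟩ := Finset.mem_biUnion.mp h
      simp only [Finset.mem_insert, Finset.mem_singleton] at hmem
      rcases hmem with rfl | rfl | rfl | rfl <;>
        exact ⟨Or.inl ⟨i, by simp⟩, by simp [rt, yv]⟩
    · obtain ⟨j, -, hmem⟩ := Finset.mem_biUnion.mp h
      rcases hvs j with ⟨h0, hj, haj⟩ | ⟨h0, hj, haj⟩ | ⟨h0, hj, haj⟩ <;>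
        simp only [clE, h0, Fin.reduceEq, reduceIte, Finset.mem_insert,
          Finset.mem_singleton] at hmem <;>
        rcases hmem with rfl | rfl | rfl <;>
        refine ⟨Or.inr ?_, by simp [rt, yv, kv]⟩ <;>
        first
          | (refine Or.inl ⟨vi j, ?_⟩ ; simp [yv, Sym2.eq_iff] ; done)
          | (refine Or.inr ⟨vi j, ?_⟩ ; simp [hj, yv, kv, Sym2.eq_iff] ; done)
  · intro S hr q
    have hmap : ∀ v : SandV m p, ∃ e, v ∈ sandC q ∩ S →
        e ∈ pE vi sl q v ∧ FSand.Crossing S e ∧ e ∈ E0 vi sl := by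
      intro v
      by_cases hv : v ∈ sandC q ∩ S
      · obtain ⟨hc, hS⟩ := Finset.mem_inter.mp hv
        obtain ⟨e, h1, h2, h3⟩ := exists_cross i1 i2 i3 a vi sl hvs S hr q v hc hS
        exact ⟨e, fun _ => ⟨h1, h2, h3⟩⟩
      · exact ⟨s(rt, rt), fun h => absurd h hv⟩
    choose f hf using hmap
    have hinj : Set.InjOn f ↑(sandC (m := m) (p := p) q ∩ S) := by
      intro v hv v' hv' hee
      rw [Finset.mem_coe] at hv hv'
      exact key i1 i2 i3 a vi sl hvs q v (Finset.mem_inter.mp hv).1 v'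
        (Finset.mem_inter.mp hv').1 (f v) (hf v hv).1 (by rw [hee]; exact (hf v' hv').1)
    calc (sandC q ∩ S).card = ((sandC q ∩ S).image f).card :=
          (Finset.card_image_of_injOn hinj).symm
      _ ≤ ∑ e ∈ (sandC q ∩ S).image f, xcap vi sl e := by
          rw [Finset.card_eq_sum_ones]
          refine Finset.sum_le_sum fun e hemem => ?_
          obtain ⟨v, hvmem, rfl⟩ := Finset.mem_image.mp hemem
          have h3 := (hf v hvmem).2.2
          simp [xcap, h3]
      _ ≤ ∑ e ∈ Finset.univ.filter (FSand.Crossing S), xcap vi sl e := by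
          refine Finset.sum_le_sum_of_subset fun e hemem => ?_
          obtain ⟨v, hvmem, rfl⟩ := Finset.mem_image.mp hemem
          exact Finset.mem_filter.mpr ⟨Finset.mem_univ _, (hf v hvmem).2.1⟩
      _ = FSand.cutCap (xcap vi sl) S := rfl

lemma sum_union_le' {α : Type} [DecidableEq α] (A B : Finset α) (f : α → ℝ)
    (hf : ∀ x, 0 ≤ f x) : ∑ x ∈ A ∪ B, f x ≤ ∑ x ∈ A, f x + ∑ x ∈ B, f x := by
  have h := Finset.sum_union_inter (s₁ := A) (s₂ := B) (f := f)
  have h2 : 0 ≤ ∑ x ∈ A ∩ B, f x := Finset.sum_nonneg fun x _ => hf x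
  linarith

lemma sum_biUnion_le' {α β : Type} [DecidableEq α] [DecidableEq β] (s : Finset α)
    (t : α → Finset β) (f : β → ℝ) (hf : ∀ x, 0 ≤ f x) :
    ∑ x ∈ s.biUnion t, f x ≤ ∑ a ∈ s, ∑ x ∈ t a, f x := by
  induction s using Finset.induction_on with
  | empty => simp
  | insert _ _ hna ih =>
    rw [Finset.biUnion_insert, Finset.sum_insert hna]
    exact le_trans (sum_union_le' _ _ _ hf) (by linarith)

lemma sum_insert_le' {α : Type} [DecidableEq α] (a : α) (s : Finset α) (f : α → ℝ)
    (hf : ∀ x, 0 ≤ f x) : ∑ x ∈ insert a s, f x ≤ f a + ∑ x ∈ s, f x := by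
  by_cases h : a ∈ s
  · rw [Finset.insert_eq_self.mpr h]
    have := hf a
    linarith
  · rw [Finset.sum_insert h]

lemma sum_triple_le' {α : Type} [DecidableEq α] (a b c : α) (f : α → ℝ)
    (hf : ∀ x, 0 ≤ f x) : ∑ x ∈ ({a, b, c} : Finset α), f x ≤ f a + f b + f c := by
  have h1 := sum_insert_le' a ({b, c} : Finset α) f hf
  have h2 := sum_insert_le' b ({c} : Finset α) f hf
  have h3 : ∑ x ∈ ({c} : Finset α), f x = f c := Finset.sum_singleton _ _
  calc ∑ x ∈ ({a, b, c} : Finset α), f x ≤ f a + ∑ x ∈ ({b, c} : Finset α), f x := h1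
    _ ≤ f a + (f b + ∑ x ∈ ({c} : Finset α), f x) := by linarith
    _ = f a + f b + f c := by rw [h3]; ring

lemma sum_quad_le' {α : Type} [DecidableEq α] (a b c d : α) (f : α → ℝ)
    (hf : ∀ x, 0 ≤ f x) :
    ∑ x ∈ ({a, b, c, d} : Finset α), f x ≤ f a + f b + f c + f d := by
  have h1 := sum_insert_le' a ({b, c, d} : Finset α) f hf
  have h2 := sum_triple_le' b c d f hf
  calc ∑ x ∈ ({a, b, c, d} : Finset α), f x ≤ f a + ∑ x ∈ ({b, c, d} : Finset α), f x := h1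
    _ ≤ f a + (f b + f c + f d) := by linarith
    _ = f a + f b + f c + f d := by ring

lemma not_root_of_path {e : Sym2 (SandV m p)} (h : PathEdge e) : ¬ RootEdge e := by
  obtain ⟨i, h⟩ := h
  rcases h with rfl | rfl | rfl | rfl | rfl | rfl <;>
    simp [RootEdge, rt, yv, Sym2.eq_iff]

lemma not_root_of_cross {i1 i2 i3 : Fin p → Fin m} {e : Sym2 (SandV m p)}
    (h : CrossEdge i1 i2 i3 e) : ¬ RootEdge e := by
  obtain ⟨i, h⟩ := h
  rcases h with rfl | rfl | rfl <;> simp [RootEdge, rt, yv, kv, Sym2.eq_iff]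

lemma not_path_of_cross {i1 i2 i3 : Fin p → Fin m} {e : Sym2 (SandV m p)}
    (h : CrossEdge i1 i2 i3 e) : ¬ PathEdge e := by
  obtain ⟨i, h⟩ := h
  rcases h with rfl | rfl | rfl <;> simp [PathEdge, rt, yv, kv, Sym2.eq_iff]

lemma w_root {M : ℝ} {i1 i2 i3 : Fin p → Fin m} {e : Sym2 (SandV m p)}
    (h : RootEdge e) : sandW M i1 i2 i3 e = 2 := if_pos h

lemma w_path {M : ℝ} {i1 i2 i3 : Fin p → Fin m} {e : Sym2 (SandV m p)}
    (h : PathEdge e) : sandW M i1 i2 i3 e = 1 := by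
  rw [sandW, if_neg (not_root_of_path h), if_pos h]

lemma w_cross {M : ℝ} {i1 i2 i3 : Fin p → Fin m} {e : Sym2 (SandV m p)}
    (h : CrossEdge i1 i2 i3 e) : sandW M i1 i2 i3 e = M := by
  rw [sandW, if_neg (not_root_of_cross h), if_neg (not_path_of_cross h), if_pos h]

lemma cost (i1 i2 i3 : Fin p → Fin m) (a : Fin p → Bool) (vi : Fin m → Fin p)
    (sl : Fin m → Fin 3) (hvs : ∀ j, serves i1 i2 i3 a j (vi j) (sl j))
    (M : ℝ) (hM0 : 0 ≤ M) :
    FSand.instCost (sandW M i1 i2 i3) (xcap vi sl) ≤ (M + 2) * m + 8 * p := by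
  have hw0 : ∀ e : Sym2 (SandV m p), 0 ≤ sandW M i1 i2 i3 e := by
    intro e
    rw [sandW]
    split_ifs <;> linarith
  have hmul : ∀ e : Sym2 (SandV m p), sandW M i1 i2 i3 e * (xcap vi sl e : ℝ) =
      if e ∈ E0 vi sl then sandW M i1 i2 i3 e else 0 := by
    intro e
    by_cases h : e ∈ E0 vi sl <;> simp [xcap, h]
  rw [FSand.instCost]
  simp only [hmul]
  rw [Finset.sum_ite_mem, Finset.univ_inter, E0]
  have hroot : ∑ e ∈ rE (m := m) (p := p), sandW M i1 i2 i3 e ≤ 8 * p := by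
    refine le_trans (sum_biUnion_le' _ _ _ hw0) ?_
    have hb : ∀ i : Fin p,
        ∑ e ∈ ({s(rt, yv i 0), s(rt, yv i 2), s(rt, yv i 4), s(rt, yv i 6)} :
          Finset (Sym2 (SandV m p))), sandW M i1 i2 i3 e ≤ 8 := by
      intro i
      refine le_trans (sum_quad_le' _ _ _ _ _ hw0) ?_
      rw [w_root ⟨i, Or.inl rfl⟩, w_root ⟨i, Or.inr (Or.inl rfl)⟩,
        w_root ⟨i, Or.inr (Or.inr (Or.inl rfl))⟩, w_root ⟨i, Or.inr (Or.inr (Or.inr rfl))⟩]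
      norm_num
    calc ∑ i : Fin p, ∑ e ∈ ({s(rt, yv i 0), s(rt, yv i 2), s(rt, yv i 4), s(rt, yv i 6)} :
          Finset (Sym2 (SandV m p))), sandW M i1 i2 i3 e ≤ ∑ _i : Fin p, (8 : ℝ) :=
          Finset.sum_le_sum fun i _ => hb i
      _ = 8 * p := by simp [Finset.sum_const, Finset.card_univ, mul_comm]
  have hcl : ∑ e ∈ Finset.univ.biUnion (clE vi sl), sandW M i1 i2 i3 e ≤ (M + 2) * m := by
    refine le_trans (sum_biUnion_le' _ _ _ hw0) ?_
    have hb : ∀ j : Fin m, ∑ e ∈ clE vi sl j, sandW M i1 i2 i3 e ≤ M + 2 := by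
      intro j
      rcases hvs j with ⟨h0, hj, haj⟩ | ⟨h0, hj, haj⟩ | ⟨h0, hj, haj⟩
      · rw [clE, h0, if_pos rfl]
        refine le_trans (sum_triple_le' _ _ _ _ hw0) ?_
        rw [w_path ⟨vi j, Or.inl rfl⟩,
          w_path ⟨vi j, Or.inr (Or.inl Sym2.eq_swap)⟩,
          w_cross ⟨vi j, Or.inl (by rw [hj])⟩]
        linarith
      · rw [clE, h0]
        norm_num
        refine le_trans (sum_triple_le' _ _ _ _ hw0) ?_
        rw [w_path ⟨vi j, Or.inr (Or.inr (Or.inr (Or.inr (Or.inl rfl))))⟩,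
          w_path ⟨vi j, Or.inr (Or.inr (Or.inr (Or.inr (Or.inr Sym2.eq_swap))))⟩,
          w_cross ⟨vi j, Or.inr (Or.inr (by rw [hj]))⟩]
        linarith
      · rw [clE, h0]
        norm_num
        refine le_trans (sum_triple_le' _ _ _ _ hw0) ?_
        rw [w_path ⟨vi j, Or.inr (Or.inr (Or.inl rfl))⟩,
          w_path ⟨vi j, Or.inr (Or.inr (Or.inr (Or.inl Sym2.eq_swap)))⟩,
          w_cross ⟨vi j, Or.inr (Or.inl (by rw [hj]))⟩]
        linarith
    calc ∑ j : Fin m, ∑ e ∈ clE vi sl j, sandW M i1 i2 i3 e ≤ ∑ _j : Fin m, (M + 2) :=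
          Finset.sum_le_sum fun j _ => hb j
      _ = (M + 2) * m := by
          simp only [Finset.sum_const, Finset.card_univ, Fintype.card_fin, nsmul_eq_mul]
          ring
  have htot := sum_union_le' (rE (m := m) (p := p)) (Finset.univ.biUnion (clE vi sl))
    (sandW M i1 i2 i3) hw0
  linarith

end SandSat

open FSand SandSat in
/-- completeness: if the SAT formula is satisfiable, the constructed
two-color f-SAND instance has a feasible capacity installation of cost at most
`(M+2)·m + 8p`. -/
theorem stmt_6 {m p : ℕ} (i1 i2 i3 : Fin p → Fin m)
    (hocc : ∀ i, i1 i ≠ i2 i ∧ i1 i ≠ i3 i ∧ i2 i ≠ i3 i)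
    (M : ℝ) (hM : 2 * (m : ℝ) + 8 * p < M)
    (hsat : Satisfiable i1 i2 i3) :
    ∃ x : Sym2 (SandV m p) → ℕ,
      Feasible (sandG i1 i2 i3) rt sandC x ∧
      instCost (sandW M i1 i2 i3) x ≤ (M + 2) * m + 8 * p := by
  obtain ⟨a, ha⟩ := hsat
  have hex : ∀ j : Fin m, ∃ iq : Fin p × Fin 3, serves i1 i2 i3 a j iq.1 iq.2 := by
    intro j
    rcases ha j with ⟨i, hi, hai⟩ | ⟨i, hi, hai⟩
    · rcases hi with h | h
      · exact ⟨(i, 0), Or.inl ⟨rfl, h, hai⟩⟩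
      · exact ⟨(i, 1), Or.inr (Or.inl ⟨rfl, h, hai⟩)⟩
    · exact ⟨(i, 2), Or.inr (Or.inr ⟨rfl, hi, hai⟩)⟩
  choose f hf using hex
  have hM0 : 0 ≤ M := by
    have h1 : (0 : ℝ) ≤ 2 * m + 8 * p := by positivity
    linarith
  exact ⟨xcap (fun j => (f j).1) (fun j => (f j).2),
    feas i1 i2 i3 a _ _ hf, cost i1 i2 i3 a _ _ hf M hM0⟩
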